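/- Let Ŝ be the Doob h-transform of two-dimensional simple random walk by the potential kernel a, i.e., the Markov chain on ℤ² \ {0} with transition probability a(y)/(4a(x)) from x to its neighbour y. Let 𝒩 = {(1,0),(−1,0),(0,1),(0,−1)} be the set of the four neighbours of the origin, and let τ̂₀(𝒩) be the entrance time of Ŝ into 𝒩. Then the stopped process (1/a(Ŝ_{k ∧ τ̂₀(𝒩)}))_{k ≥ 0} is a martingale under P̂_x for every x ≠ 0. -/

import Mathlib

open MeasureTheory Filter

/-- Nearest-neighbour relation on `ℤ²`. -/
def adjacent (x y : ℤ × ℤ) : Prop := (x.1 - y.1) ^ 2 + (x.2 - y.2) ^ 2 = 1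

instance : ∀ x y : ℤ × ℤ, Decidable (adjacent x y) := fun x y => by
  unfold adjacent; infer_instance

/-- Transition kernel of the conditioned walk `Ŝ` (Doob `h`-transform of SRW by `a`). -/
noncomputable def phat (a : ℤ × ℤ → ℝ) (x y : ℤ × ℤ) : ℝ :=
  if adjacent x y ∧ x ≠ 0 then a y / (4 * a x) else 0

/-- The four neighbours of the origin. -/
def nbrs0 : Finset (ℤ × ℤ) := {(1, 0), (-1, 0), (0, 1), (0, -1)}

open Classical in
/-- The stopped process `1 / a (Ŝ_{k ∧ τ̂₀(𝒩)})` on the path space of `Ŝ`. -/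
noncomputable def stoppedInvA (a : ℤ × ℤ → ℝ) (k : ℕ) (ω : ℕ → ℤ × ℤ) : ℝ :=
  if h : ∃ j, ω j ∈ nbrs0 then (a (ω (min k (Nat.find h))))⁻¹
  else (a (ω k))⁻¹

/-- The natural filtration of the coordinate process. -/
noncomputable def coordFiltration :
    Filtration ℕ (inferInstance : MeasurableSpace (ℕ → ℤ × ℤ)) :=
  Filtration.natural (fun i (ω : ℕ → ℤ × ℤ) => ω i)
    (fun i => (measurable_pi_apply i).stronglyMeasurable)

namespace SIA

/-! ### Neighbour combinatorics -/

def nbrSet (z : ℤ × ℤ) : Finset (ℤ × ℤ) := {z + (1,0), z - (1,0), z + (0,1), z - (0,1)}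

lemma mem_nbrSet_iff {z y : ℤ × ℤ} : y ∈ nbrSet z ↔ adjacent z y := by
  rcases z with ⟨z1, z2⟩; rcases y with ⟨y1, y2⟩
  simp only [nbrSet, adjacent, Finset.mem_insert, Finset.mem_singleton, Prod.ext_iff,
    Prod.mk_add_mk, Prod.mk_sub_mk]
  constructor
  · rintro (⟨h1, h2⟩ | ⟨h1, h2⟩ | ⟨h1, h2⟩ | ⟨h1, h2⟩) <;> subst h1 <;> subst h2 <;> ring
  · intro h
    have hb1 : -1 ≤ z1 - y1 ∧ z1 - y1 ≤ 1 := by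
      constructor <;> nlinarith [sq_nonneg (z2 - y2), sq_nonneg (z1 - y1 + 1), sq_nonneg (z1 - y1 - 1)]
    have hb2 : -1 ≤ z2 - y2 ∧ z2 - y2 ≤ 1 := by
      constructor <;> nlinarith [sq_nonneg (z1 - y1), sq_nonneg (z2 - y2 + 1), sq_nonneg (z2 - y2 - 1)]
    have e1 : z1 - y1 = -1 ∨ z1 - y1 = 0 ∨ z1 - y1 = 1 := by omega
    have e2 : z2 - y2 = -1 ∨ z2 - y2 = 0 ∨ z2 - y2 = 1 := by omega
    rcases e1 with h1|h1|h1 <;> rcases e2 with h2|h2|h2 <;> rw [h1, h2] at h <;>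
      norm_num at h <;> omega

lemma sum_nbrSet {M : Type*} [AddCommMonoid M] (z : ℤ × ℤ) (f : ℤ × ℤ → M) :
    ∑ y ∈ nbrSet z, f y = f (z + (1,0)) + f (z - (1,0)) + f (z + (0,1)) + f (z - (0,1)) := by
  rcases z with ⟨z1, z2⟩
  have h12 : ((z1,z2) + ((1:ℤ),(0:ℤ))) ∉ ({(z1,z2) - (1,0), (z1,z2) + (0,1), (z1,z2) - (0,1)} : Finset (ℤ×ℤ)) := by
    simp only [Finset.mem_insert, Finset.mem_singleton, Prod.ext_iff, Prod.mk_add_mk, Prod.mk_sub_mk]; omega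
  have h23 : ((z1,z2) - ((1:ℤ),(0:ℤ))) ∉ ({(z1,z2) + (0,1), (z1,z2) - (0,1)} : Finset (ℤ×ℤ)) := by
    simp only [Finset.mem_insert, Finset.mem_singleton, Prod.ext_iff, Prod.mk_add_mk, Prod.mk_sub_mk]; omega
  have h34 : ((z1,z2) + ((0:ℤ),(1:ℤ))) ∉ ({(z1,z2) - (0,1)} : Finset (ℤ×ℤ)) := by
    simp only [Finset.mem_insert, Finset.mem_singleton, Prod.ext_iff, Prod.mk_add_mk, Prod.mk_sub_mk]; omega
  rw [nbrSet, Finset.sum_insert h12, Finset.sum_insert h23, Finset.sum_insert h34,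
    Finset.sum_singleton]
  abel

lemma adjacent_of_mem {z y : ℤ × ℤ} (h : y ∈ nbrSet z) : adjacent z y := mem_nbrSet_iff.mp h

lemma self_mem1 (z : ℤ×ℤ) : z + (1,0) ∈ nbrSet z := by simp [nbrSet]
lemma self_mem2 (z : ℤ×ℤ) : z - (1,0) ∈ nbrSet z := by simp [nbrSet]
lemma self_mem3 (z : ℤ×ℤ) : z + (0,1) ∈ nbrSet z := by simp [nbrSet]
lemma self_mem4 (z : ℤ×ℤ) : z - (0,1) ∈ nbrSet z := by simp [nbrSet]

lemma mem_nbrs0_of_nbr_zero {z y : ℤ×ℤ} (hy : y ∈ nbrSet z) (h0 : y = 0) : z ∈ nbrs0 := by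
  rcases z with ⟨z1,z2⟩
  simp only [nbrSet, Finset.mem_insert, Finset.mem_singleton] at hy
  have : ((z1,z2) : ℤ×ℤ) = (-1,0) ∨ ((z1,z2):ℤ×ℤ) = (1,0) ∨ ((z1,z2):ℤ×ℤ) = (0,-1) ∨ ((z1,z2):ℤ×ℤ) = (0,1) := by
    rcases hy with h|h|h|h <;> rw [h] at h0 <;>
      simp only [Prod.ext_iff, Prod.mk_add_mk, Prod.mk_sub_mk, Prod.fst_zero, Prod.snd_zero] at h0 <;>
      simp only [Prod.ext_iff] <;> omega
  rcases this with h|h|h|h <;> rw [h] <;> decide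

lemma phat_of_adj {a : ℤ × ℤ → ℝ} {z y : ℤ × ℤ} (hadj : adjacent z y) (hz : z ≠ 0) :
    phat a z y = a y / (4 * a z) := if_pos ⟨hadj, hz⟩

/-! ### The stopped value process -/

open Classical in
noncomputable def hitVal (a : ℤ × ℤ → ℝ) (k : ℕ) (ω : ℕ → ℤ × ℤ) : ℝ :=
  if h : ∃ j, j ≤ k ∧ ω j ∈ nbrs0 then (a (ω (Nat.find h)))⁻¹ else (a (ω k))⁻¹

lemma stoppedInvA_eq_hitVal (a : ℤ × ℤ → ℝ) (k : ℕ) (ω : ℕ → ℤ × ℤ) :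
    stoppedInvA a k ω = hitVal a k ω := by
  classical
  unfold stoppedInvA hitVal
  split_ifs with h1 h2 h2
  · have hle : Nat.find h2 ≤ k := (Nat.find_spec h2).1
    have h12 : Nat.find h1 ≤ Nat.find h2 := Nat.find_le (Nat.find_spec h2).2
    have h21 : Nat.find h2 ≤ Nat.find h1 :=
      Nat.find_le ⟨le_trans h12 hle, Nat.find_spec h1⟩
    have heq : Nat.find h1 = Nat.find h2 := le_antisymm h12 h21
    rw [heq, min_eq_right hle]
  · have : ¬ Nat.find h1 ≤ k := fun hc => h2 ⟨Nat.find h1, hc, Nat.find_spec h1⟩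
    rw [min_eq_left (by omega)]
  · exact absurd ⟨Nat.find h2, (Nat.find_spec h2).2⟩ h1
  · rfl

lemma hitVal_congr (a : ℤ × ℤ → ℝ) (k : ℕ) {ω ω' : ℕ → ℤ × ℤ}
    (h : ∀ i ≤ k, ω i = ω' i) : hitVal a k ω = hitVal a k ω' := by
  classical
  unfold hitVal
  split_ifs with h1 h2 h2
  · have hle : Nat.find h1 ≤ k := (Nat.find_spec h1).1
    have hle2 : Nat.find h2 ≤ k := (Nat.find_spec h2).1
    have h12 : Nat.find h2 ≤ Nat.find h1 :=
      Nat.find_le ⟨hle, by rw [← h _ hle]; exact (Nat.find_spec h1).2⟩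
    have h21 : Nat.find h1 ≤ Nat.find h2 :=
      Nat.find_le ⟨hle2, by rw [h _ hle2]; exact (Nat.find_spec h2).2⟩
    have heq : Nat.find h1 = Nat.find h2 := le_antisymm h21 h12
    rw [heq, h _ hle2]
  · exact absurd ⟨Nat.find h1, (Nat.find_spec h1).1,
      by rw [← h _ (Nat.find_spec h1).1]; exact (Nat.find_spec h1).2⟩ h2
  · exact absurd ⟨Nat.find h2, (Nat.find_spec h2).1,
      by rw [h _ (Nat.find_spec h2).1]; exact (Nat.find_spec h2).2⟩ h1
  · rw [h _ le_rfl]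

lemma stoppedInvA_congr (a : ℤ × ℤ → ℝ) (k : ℕ) {ω ω' : ℕ → ℤ × ℤ}
    (h : ∀ i ≤ k, ω i = ω' i) : stoppedInvA a k ω = stoppedInvA a k ω' := by
  rw [stoppedInvA_eq_hitVal, stoppedInvA_eq_hitVal]; exact hitVal_congr a k h

lemma hitVal_succ_of_hit (a : ℤ × ℤ → ℝ) (k : ℕ) {ω : ℕ → ℤ × ℤ}
    (h : ∃ j ≤ k, ω j ∈ nbrs0) : hitVal a (k+1) ω = hitVal a k ω := by
  classical
  obtain ⟨j, hj, hjhit⟩ := h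
  unfold hitVal
  have h1 : ∃ i, i ≤ k + 1 ∧ ω i ∈ nbrs0 := ⟨j, by omega, hjhit⟩
  have h2 : ∃ i, i ≤ k ∧ ω i ∈ nbrs0 := ⟨j, hj, hjhit⟩
  rw [dif_pos h1, dif_pos h2]
  have ha : Nat.find h1 ≤ j := Nat.find_le ⟨by omega, hjhit⟩
  have hb : Nat.find h2 ≤ Nat.find h1 := Nat.find_le ⟨by omega, (Nat.find_spec h1).2⟩
  have hc : Nat.find h1 ≤ Nat.find h2 := Nat.find_le ⟨by omega, (Nat.find_spec h2).2⟩
  rw [le_antisymm hc hb]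

lemma hitVal_of_no_hit (a : ℤ × ℤ → ℝ) (k : ℕ) {ω : ℕ → ℤ × ℤ}
    (h : ¬ ∃ j < k, ω j ∈ nbrs0) : hitVal a k ω = (a (ω k))⁻¹ := by
  classical
  unfold hitVal
  split_ifs with h1
  · have hle : Nat.find h1 ≤ k := (Nat.find_spec h1).1
    have hlt : ¬ Nat.find h1 < k := fun hc => h ⟨Nat.find h1, hc, (Nat.find_spec h1).2⟩
    have heq : Nat.find h1 = k := by omega
    rw [heq]
  · rfl

lemma exists_val (a : ℤ × ℤ → ℝ) (k : ℕ) (ω : ℕ → ℤ × ℤ) :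
    ∃ j ≤ k, stoppedInvA a k ω = (a (ω j))⁻¹ := by
  classical
  unfold stoppedInvA
  split_ifs with h1
  · exact ⟨min k (Nat.find h1), min_le_left _ _, rfl⟩
  · exact ⟨k, le_rfl, rfl⟩

/-! ### Cylinders, projections, weights -/

def proj (n : ℕ) (ω : ℕ → ℤ × ℤ) : Fin (n+1) → ℤ × ℤ := fun i => ω i

def extend (n : ℕ) (ρ : Fin (n+1) → ℤ × ℤ) : ℕ → ℤ × ℤ := fun i => ρ ⟨min i n, by omega⟩

def cyl (n : ℕ) (σ : ℕ → ℤ × ℤ) : Set (ℕ → ℤ × ℤ) := {ω | ∀ i ≤ n, ω i = σ i}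

noncomputable def wgt (a : ℤ × ℤ → ℝ) (x : ℤ × ℤ) (n : ℕ) (σ : ℕ → ℤ × ℤ) : ℝ :=
  (if σ 0 = x then 1 else 0) * ∏ i ∈ Finset.range n, phat a (σ i) (σ (i + 1))

lemma extend_agree (n : ℕ) (ρ : Fin (n+1) → ℤ × ℤ) (i : ℕ) (h : i ≤ n) :
    extend n ρ i = ρ ⟨i, by omega⟩ := by
  simp only [extend]
  congr 1
  exact Fin.ext (by simp [min_eq_left h])

lemma extend_proj_agree (n : ℕ) (ω : ℕ → ℤ × ℤ) (i : ℕ) (h : i ≤ n) :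
    extend n (proj n ω) i = ω i := by
  rw [extend_agree n _ i h]; rfl

lemma cyl_eq_preimage (n : ℕ) (ρ : Fin (n+1) → ℤ × ℤ) :
    cyl n (extend n ρ) = proj n ⁻¹' {ρ} := by
  ext ω
  simp only [cyl, Set.mem_setOf_eq, Set.mem_preimage, Set.mem_singleton_iff]
  constructor
  · intro h
    funext i
    have := h i (by omega : (i : ℕ) ≤ n)
    rw [extend_agree n ρ i (by omega)] at this
    simpa [proj] using this
  · intro h i hi
    rw [extend_agree n ρ i hi, ← h]
    rfl

lemma preimage_eq_iUnion (n : ℕ) (S : Set (Fin (n+1) → ℤ × ℤ)) :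
    proj n ⁻¹' S = ⋃ (ρ : S), cyl n (extend n ρ.val) := by
  have : S = ⋃ (ρ : S), {ρ.val} := by simp
  conv_lhs => rw [this]
  rw [Set.preimage_iUnion]
  exact Set.iUnion_congr fun ρ => (cyl_eq_preimage n ρ.val).symm

lemma measurable_cyl (n : ℕ) (σ : ℕ → ℤ × ℤ) : MeasurableSet (cyl n σ) := by
  have : cyl n σ = ⋂ (i : ℕ) (_ : i ≤ n), (fun ω : ℕ → ℤ × ℤ => ω i) ⁻¹' {σ i} := by
    ext ω; simp [cyl]
  rw [this]
  exact MeasurableSet.iInter fun i => MeasurableSet.iInter fun _ =>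
    (measurable_pi_apply i) (measurableSet_singleton _)

lemma cyl_succ (n : ℕ) (σ : ℕ → ℤ × ℤ) :
    cyl n σ = ⋃ (y : ℤ × ℤ), cyl (n+1) (Function.update σ (n+1) y) := by
  ext ω
  simp only [cyl, Set.mem_setOf_eq, Set.mem_iUnion]
  constructor
  · intro h
    refine ⟨ω (n+1), fun i hi => ?_⟩
    rcases eq_or_ne i (n+1) with rfl | hne
    · rw [Function.update_self]
    · rw [Function.update_of_ne hne]
      exact h i (by omega)
  · rintro ⟨y, hy⟩ i hi
    have := hy i (by omega)
    rwa [Function.update_of_ne (by omega)] at this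

lemma mem_cyl_succ {n : ℕ} {σ : ℕ → ℤ × ℤ} {y : ℤ × ℤ} {ω : ℕ → ℤ × ℤ}
    (h : ω ∈ cyl (n+1) (Function.update σ (n+1) y)) :
    (∀ i ≤ n, ω i = σ i) ∧ ω (n+1) = y := by
  constructor
  · intro i hi
    have := h i (by omega)
    rwa [Function.update_of_ne (by omega)] at this
  · have := h (n+1) le_rfl
    rwa [Function.update_self] at this

lemma disjoint_cyl_succ (n : ℕ) (σ : ℕ → ℤ × ℤ) :
    Pairwise (Function.onFun Disjoint (fun y : ℤ × ℤ => cyl (n+1) (Function.update σ (n+1) y))) := by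
  intro y y' hne
  rw [Function.onFun, Set.disjoint_left]
  intro ω h1 h2
  exact hne ((mem_cyl_succ h1).2 ▸ (mem_cyl_succ h2).2 ▸ rfl)

lemma disjoint_cyl_extend (n : ℕ) {ρ ρ' : Fin (n+1) → ℤ × ℤ} (hne : ρ ≠ ρ') :
    Disjoint (cyl n (extend n ρ)) (cyl n (extend n ρ')) := by
  rw [cyl_eq_preimage, cyl_eq_preimage]
  exact Disjoint.preimage _ (by simpa using hne)

lemma wgt_succ (a : ℤ × ℤ → ℝ) (x : ℤ × ℤ) (n : ℕ) (σ : ℕ → ℤ × ℤ) (y : ℤ × ℤ) :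
    wgt a x (n+1) (Function.update σ (n+1) y) = wgt a x n σ * phat a (σ n) y := by
  unfold wgt
  rw [Finset.prod_range_succ]
  rw [Function.update_of_ne (by omega : (0:ℕ) ≠ n+1)]
  rw [Function.update_of_ne (by omega : n ≠ n+1), Function.update_self]
  rw [Finset.prod_congr rfl (fun i hi => ?_)]
  · ring
  · rw [Finset.mem_range] at hi
    rw [Function.update_of_ne (by omega : i ≠ n+1), Function.update_of_ne (by omega : i+1 ≠ n+1)]

lemma phat_nonneg {a : ℤ × ℤ → ℝ} (ha : ∀ y, 0 ≤ a y) (z y : ℤ × ℤ) : 0 ≤ phat a z y := by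
  unfold phat
  split_ifs with h
  · exact div_nonneg (ha y) (by linarith [ha z])
  · exact le_refl 0

lemma wgt_nonneg {a : ℤ × ℤ → ℝ} (ha : ∀ y, 0 ≤ a y) (x : ℤ × ℤ) (n : ℕ) (σ : ℕ → ℤ × ℤ) :
    0 ≤ wgt a x n σ := by
  unfold wgt
  apply mul_nonneg
  · split_ifs <;> norm_num
  · exact Finset.prod_nonneg fun i _ => phat_nonneg ha _ _

lemma a_ne_of_phat_ne {a : ℤ × ℤ → ℝ} {u v : ℤ × ℤ} (h : phat a u v ≠ 0) : a v ≠ 0 := by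
  intro hav
  apply h
  unfold phat
  split_ifs with hc
  · rw [hav]; simp
  · rfl

lemma adj_of_phat_ne {a : ℤ × ℤ → ℝ} {u v : ℤ × ℤ} (h : phat a u v ≠ 0) : adjacent u v := by
  by_contra hc
  exact h (if_neg (fun hh => hc hh.1))

/-! ### Filtration lemmas -/

lemma comap_le_coordFiltration {j n : ℕ} (hj : j ≤ n) :
    MeasurableSpace.comap (fun ω : ℕ → ℤ × ℤ => ω j) inferInstance ≤ coordFiltration n := by
  unfold coordFiltration
  exact le_biSup (fun j => MeasurableSpace.comap (fun ω : ℕ → ℤ × ℤ => ω j) inferInstance) hj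

lemma measurable_proj (n : ℕ) : Measurable[coordFiltration n] (proj n) := by
  exact @measurable_pi_lambda (ℕ → ℤ × ℤ) (Fin (n+1)) (fun _ => ℤ × ℤ) (coordFiltration n) _
    (proj n) (fun i =>
      measurable_iff_comap_le.mpr (comap_le_coordFiltration (by omega : (i:ℕ) ≤ n)))

lemma coordFiltration_le_comap (n : ℕ) :
    (coordFiltration n : MeasurableSpace (ℕ → ℤ × ℤ)) ≤ MeasurableSpace.comap (proj n) ⊤ := by
  unfold coordFiltration
  show (⨆ j, ⨆ _ : j ≤ n, MeasurableSpace.comap (fun ω : ℕ → ℤ × ℤ => ω j) _) ≤ _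
  apply iSup₂_le
  intro j hj
  have : (fun ω : ℕ → ℤ × ℤ => ω j)
      = (fun ρ : Fin (n+1) → ℤ × ℤ => ρ ⟨j, by omega⟩) ∘ proj n := rfl
  rw [this, ← MeasurableSpace.comap_comp]
  exact MeasurableSpace.comap_mono le_top

lemma exists_preimage_of_measurable {n : ℕ} {s : Set (ℕ → ℤ × ℤ)}
    (hs : MeasurableSet[coordFiltration n] s) :
    ∃ S : Set (Fin (n+1) → ℤ × ℤ), s = proj n ⁻¹' S := by
  have := coordFiltration_le_comap n s hs
  rw [MeasurableSpace.measurableSet_comap] at this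
  obtain ⟨S, _, hS⟩ := this
  exact ⟨S, hS.symm⟩

lemma adapted_stoppedInvA (a : ℤ × ℤ → ℝ) : StronglyAdapted coordFiltration (stoppedInvA a) := by
  intro n
  have hfac : stoppedInvA a n
      = (fun ρ : Fin (n+1) → ℤ × ℤ => stoppedInvA a n (extend n ρ)) ∘ proj n := by
    funext ω
    exact stoppedInvA_congr a n (fun i hi => (extend_proj_agree n ω i hi).symm)
  rw [hfac]
  exact (Measurable.stronglyMeasurable
    ((measurable_of_countable _).comp (measurable_proj n)))

end SIA

open SIA in
theorem stoppedInvA_martingale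
    (a : ℤ × ℤ → ℝ) (ha0 : a 0 = 0)
    (hapos : ∀ x : ℤ × ℤ, x ≠ 0 → 0 < a x)
    (hharm : ∀ x : ℤ × ℤ, x ≠ 0 →
      (1 / 4) * (a (x + (1, 0)) + a (x - (1, 0)) + a (x + (0, 1)) + a (x - (0, 1))) = a x)
    (x : ℤ × ℤ) (hx : x ≠ 0)
    (Phat : Measure (ℕ → ℤ × ℤ)) [IsProbabilityMeasure Phat]
    (hPhat : ∀ (n : ℕ) (ρ : ℕ → ℤ × ℤ),
      Phat {ω | ∀ i ≤ n, ω i = ρ i}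
        = ENNReal.ofReal ((if ρ 0 = x then 1 else 0)
            * ∏ i ∈ Finset.range n, phat a (ρ i) (ρ (i + 1)))) :
    Martingale (stoppedInvA a) coordFiltration Phat := by
  classical
  -- basic positivity facts
  have ha' : ∀ y, 0 ≤ a y := by
    intro y
    by_cases hy : y = 0
    · rw [hy, ha0]
    · exact (hapos y hy).le
  have hμ : ∀ (n : ℕ) (σ : ℕ → ℤ × ℤ), Phat (cyl n σ) = ENNReal.ofReal (wgt a x n σ) :=
    fun n σ => hPhat n σ
  -- null sets
  have hnull : ∀ (n : ℕ) (S : Set (Fin (n+1) → ℤ × ℤ)),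
      (∀ ρ ∈ S, wgt a x n (extend n ρ) = 0) → Phat (proj n ⁻¹' S) = 0 := by
    intro n S hS
    rw [preimage_eq_iUnion]
    refine measure_iUnion_null fun ρ => ?_
    rw [hμ, hS ρ.val ρ.2, ENNReal.ofReal_zero]
  -- a.e. every path starts at x and makes positive-probability steps
  have hgood : ∀ᵐ ω ∂Phat, ω 0 = x ∧ ∀ i, phat a (ω i) (ω (i+1)) ≠ 0 := by
    rw [ae_iff]
    have hsub : {ω : ℕ → ℤ × ℤ | ¬ (ω 0 = x ∧ ∀ i, phat a (ω i) (ω (i+1)) ≠ 0)}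
        ⊆ (proj 0 ⁻¹' {ρ : Fin 1 → ℤ × ℤ | ρ 0 ≠ x})
          ∪ ⋃ i : ℕ, proj (i+1) ⁻¹'
              {ρ : Fin (i+2) → ℤ × ℤ | phat a (ρ ⟨i, by omega⟩) (ρ ⟨i+1, by omega⟩) = 0} := by
      intro ω hω
      simp only [Set.mem_setOf_eq, not_and_or, not_forall, not_ne_iff] at hω
      rcases hω with h1 | ⟨i, hi⟩
      · left
        exact h1
      · right
        exact Set.mem_iUnion.mpr ⟨i, hi⟩
    refine measure_mono_null hsub ?_
    · apply measure_union_null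
      · apply hnull
        intro ρ hρ
        unfold wgt
        rw [extend_agree 0 ρ 0 le_rfl]
        rw [if_neg (by simpa using hρ)]
        ring
      · refine measure_iUnion_null fun i => ?_
        apply hnull
        intro ρ hρ
        unfold wgt
        apply mul_eq_zero_of_right
        apply Finset.prod_eq_zero (Finset.mem_range.mpr (by omega : i < i + 1))
        rw [extend_agree (i+1) ρ i (by omega), extend_agree (i+1) ρ (i+1) le_rfl]
        exact hρ
  -- integrability
  have hint : ∀ k, Integrable (stoppedInvA a k) Phat := by
    intro k
    set B : Finset (ℤ × ℤ) :=
      (Finset.Icc (x.1 - k) (x.1 + k)) ×ˢ (Finset.Icc (x.2 - k) (x.2 + k)) with hB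
    have hxB : x ∈ B := by
      simp only [hB, Finset.mem_product, Finset.mem_Icc]
      omega
    have hne : B.Nonempty := ⟨x, hxB⟩
    set C : ℝ := B.sup' hne (fun z => |(a z)⁻¹|) with hC
    have hbound : ∀ᵐ ω ∂Phat, ‖stoppedInvA a k ω‖ ≤ C := by
      filter_upwards [hgood] with ω hω
      obtain ⟨h0, hsteps⟩ := hω
      have hinB : ∀ i ≤ k, ω i ∈ B := by
        have hcoord : ∀ i : ℕ, x.1 - i ≤ (ω i).1 ∧ (ω i).1 ≤ x.1 + i
            ∧ x.2 - i ≤ (ω i).2 ∧ (ω i).2 ≤ x.2 + i := by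
          intro i
          induction i with
          | zero => rw [h0]; push_cast; omega
          | succ i ih =>
            have hadj : adjacent (ω i) (ω (i+1)) := adj_of_phat_ne (hsteps i)
            have hmem := mem_nbrSet_iff.mpr hadj
            simp only [nbrSet, Finset.mem_insert, Finset.mem_singleton] at hmem
            push_cast
            push_cast at ih
            rcases hmem with h|h|h|h <;> rw [h] <;>
              simp only [Prod.fst_add, Prod.snd_add, Prod.fst_sub, Prod.snd_sub] <;> omega
        intro i hi
        have := hcoord i
        simp only [hB, Finset.mem_product, Finset.mem_Icc]
        have hik : (i : ℤ) ≤ (k : ℤ) := by exact_mod_cast hi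
        omega
      obtain ⟨j, hj, hval⟩ := exists_val a k ω
      rw [hval, Real.norm_eq_abs]
      exact Finset.le_sup' (fun z => |(a z)⁻¹|) (hinB j hj)
    exact Integrable.mono' (integrable_const C)
      (((adapted_stoppedInvA a k).mono (coordFiltration.le k)).aestronglyMeasurable)
      hbound
  -- key single-cylinder computation
  have key : ∀ (n : ℕ) (σ : ℕ → ℤ × ℤ),
      ∫ ω in cyl n σ, stoppedInvA a (n+1) ω ∂Phat
        = ∫ ω in cyl n σ, stoppedInvA a n ω ∂Phat := by
    intro n σ
    set z := σ n with hzdef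
    have hRHS : ∫ ω in cyl n σ, stoppedInvA a n ω ∂Phat
        = wgt a x n σ * stoppedInvA a n σ := by
      rw [setIntegral_congr_fun (measurable_cyl n σ)
        (g := fun _ => stoppedInvA a n σ)
        (fun ω hω => stoppedInvA_congr a n (fun i hi => hω i hi)),
        setIntegral_const, measureReal_def, hμ, ENNReal.toReal_ofReal (wgt_nonneg ha' x n σ), smul_eq_mul]
    have hLHS : ∫ ω in cyl n σ, stoppedInvA a (n+1) ω ∂Phat
        = ∑' y : ℤ × ℤ,
            wgt a x n σ * phat a z y * stoppedInvA a (n+1) (Function.update σ (n+1) y) := by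
      rw [cyl_succ n σ,
        integral_iUnion (fun y => measurable_cyl _ _) (disjoint_cyl_succ n σ)
          ((hint (n+1)).integrableOn)]
      refine tsum_congr fun y => ?_
      rw [setIntegral_congr_fun (measurable_cyl _ _)
        (g := fun _ => stoppedInvA a (n+1) (Function.update σ (n+1) y))
        (fun ω hω => stoppedInvA_congr a (n+1) (fun i hi => hω i hi)),
        setIntegral_const, measureReal_def, hμ, wgt_succ,
        ENNReal.toReal_ofReal (mul_nonneg (wgt_nonneg ha' x n σ) (phat_nonneg ha' z y)),
        smul_eq_mul]
    rw [hLHS, hRHS]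
    rw [tsum_eq_sum (s := nbrSet z) (fun y hy => by
      have hp : phat a z y = 0 := by
        unfold phat
        exact if_neg (fun hh => hy (mem_nbrSet_iff.mpr hh.1))
      rw [hp, mul_zero, zero_mul])]
    by_cases hW : wgt a x n σ = 0
    · simp [hW]
    · have hσ0 : σ 0 = x := by
        by_contra h
        exact hW (by unfold wgt; rw [if_neg h, zero_mul])
      have hsteps : ∀ i < n, phat a (σ i) (σ (i+1)) ≠ 0 := by
        intro i hi hz0
        exact hW (by
          unfold wgt
          exact mul_eq_zero_of_right _
            (Finset.prod_eq_zero (Finset.mem_range.mpr hi) hz0))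
      have hzne : z ≠ 0 := by
        cases n with
        | zero => rw [hzdef, hσ0]; exact hx
        | succ m =>
          have := a_ne_of_phat_ne (hsteps m (by omega))
          intro hc
          rw [hzdef] at hc
          rw [hc, ha0] at this
          exact this rfl
      have hane : a z ≠ 0 := ne_of_gt (hapos z hzne)
      by_cases hhit : ∃ j ≤ n, σ j ∈ nbrs0
      · -- already stopped: constant value
        have hw : ∀ y, stoppedInvA a (n+1) (Function.update σ (n+1) y) = stoppedInvA a n σ := by
          intro y
          rw [stoppedInvA_eq_hitVal, stoppedInvA_eq_hitVal]
          have hagree : ∀ i ≤ n, Function.update σ (n+1) y i = σ i :=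
            fun i hi => Function.update_of_ne (by omega) _ _
          obtain ⟨j, hj, hhit'⟩ := hhit
          rw [hitVal_succ_of_hit a n ⟨j, hj, by rw [hagree j hj]; exact hhit'⟩]
          exact hitVal_congr a n hagree
        have hsum1 : ∑ y ∈ nbrSet z, phat a z y = 1 := by
          rw [sum_nbrSet z (phat a z),
            phat_of_adj (adjacent_of_mem (self_mem1 z)) hzne,
            phat_of_adj (adjacent_of_mem (self_mem2 z)) hzne,
            phat_of_adj (adjacent_of_mem (self_mem3 z)) hzne,
            phat_of_adj (adjacent_of_mem (self_mem4 z)) hzne]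
          have h4 := hharm z hzne
          field_simp
          linarith
        calc ∑ y ∈ nbrSet z, wgt a x n σ * phat a z y
              * stoppedInvA a (n+1) (Function.update σ (n+1) y)
            = ∑ y ∈ nbrSet z, (wgt a x n σ * stoppedInvA a n σ) * phat a z y := by
              refine Finset.sum_congr rfl fun y _ => by rw [hw]; ring
          _ = (wgt a x n σ * stoppedInvA a n σ) * ∑ y ∈ nbrSet z, phat a z y := by
              rw [Finset.mul_sum]
          _ = wgt a x n σ * stoppedInvA a n σ := by rw [hsum1, mul_one]
      · -- not yet stopped
        push_neg at hhit
        have hv : stoppedInvA a n σ = (a z)⁻¹ := by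
          rw [stoppedInvA_eq_hitVal]
          exact hitVal_of_no_hit a n (fun ⟨j, hj, hh⟩ => hhit j (le_of_lt hj) hh)
        have hw : ∀ y, stoppedInvA a (n+1) (Function.update σ (n+1) y) = (a y)⁻¹ := by
          intro y
          rw [stoppedInvA_eq_hitVal]
          have h1 : ¬ ∃ j < n + 1, Function.update σ (n+1) y j ∈ nbrs0 := by
            rintro ⟨j, hj, hh⟩
            rw [Function.update_of_ne (by omega)] at hh
            exact hhit j (by omega) hh
          rw [hitVal_of_no_hit a (n+1) h1, Function.update_self]
        have hzn : z ∉ nbrs0 := hhit n le_rfl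
        have hy0 : ∀ y ∈ nbrSet z, a y ≠ 0 := by
          intro y hy
          exact ne_of_gt (hapos y (fun h0 => hzn (mem_nbrs0_of_nbr_zero hy h0)))
        have hterm : ∀ y ∈ nbrSet z,
            wgt a x n σ * phat a z y * stoppedInvA a (n+1) (Function.update σ (n+1) y)
              = wgt a x n σ * (4 * a z)⁻¹ := by
          intro y hy
          rw [hw y, phat_of_adj (adjacent_of_mem hy) hzne]
          field_simp [hy0 y hy]
        rw [Finset.sum_congr rfl hterm, sum_nbrSet z (fun _ => wgt a x n σ * (4 * a z)⁻¹), hv]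
        field_simp
        ring
  -- set-integral equality on the filtration
  have hsets : ∀ (n : ℕ) (s : Set (ℕ → ℤ × ℤ)), MeasurableSet[coordFiltration n] s →
      ∫ ω in s, stoppedInvA a n ω ∂Phat = ∫ ω in s, stoppedInvA a (n+1) ω ∂Phat := by
    intro n s hs
    obtain ⟨S, rfl⟩ := exists_preimage_of_measurable hs
    rw [preimage_eq_iUnion]
    rw [integral_iUnion (fun ρ => measurable_cyl _ _)
      (fun ρ ρ' hne => disjoint_cyl_extend n (fun h => hne (Subtype.ext h)))
      ((hint n).integrableOn)]
    rw [integral_iUnion (fun ρ => measurable_cyl _ _)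
      (fun ρ ρ' hne => disjoint_cyl_extend n (fun h => hne (Subtype.ext h)))
      ((hint (n+1)).integrableOn)]
    exact tsum_congr fun ρ => (key n (extend n ρ.val)).symm
  -- conclude
  refine martingale_nat (adapted_stoppedInvA a) hint ?_
  intro n
  exact ae_eq_condExp_of_forall_setIntegral_eq (coordFiltration.le n) (hint (n+1))
    (fun s _ _ => (hint n).integrableOn)
    (fun s hs _ => hsets n s hs)
    ((adapted_stoppedInvA a n).aestronglyMeasurable)
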